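/- arXiv:1503.03280 — 3 statements merged into one kernel-verified Lean document; each statement's English description precedes it below -/
import Mathlib

section
/- Let L be an 𝒪_F-lattice chain in V and g ∈ G = GL_F(V). Then g·𝔄(L)·g⁻¹ = 𝔄(L) if and only if there exists an integer k ∈ ℤ such that g(L(i)) = L(i+k) for all i ∈ ℤ. -/
/-!
Context: `F` is a nonarchimedean local field, modelled as a field together with a
valuation subring `OF` which is a discrete valuation ring with finite residue field,
with a fixed uniformizer `ϖF` (an irreducible element of `OF`).  `V` is a nonzero
finite-dimensional `F`-vector space, `A = End_F V` and `G = GL_F(V) = (End_F V)ˣ`.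
-/

noncomputable section

variable {F : Type*} [Field F] {V : Type*} [AddCommGroup V] [Module F V]

/-- A subring of `F` acts on any `F`-vector space by restriction of scalars. -/
instance (priority := 100) ValuationSubring.instModuleOfModule (O : ValuationSubring F) :
    Module O V :=
  Module.compHom V O.subtype

/-- `L : ℤ → Submodule 𝒪 V` is an `𝒪`-lattice chain of period `e` : each `L i` is a
finitely generated `𝒪`-submodule spanning `V` over `F` (an `𝒪`-lattice), the chain is
strictly decreasing, and `ϖ • L i = L (i + e)` for all `i`. -/
structure IsLatticeChain (O : ValuationSubring F) (ϖ : O) (L : ℤ → Submodule O V) (e : ℕ) :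
    Prop where
  period_pos : 0 < e
  fg : ∀ i, (L i).FG
  spans : ∀ i, Submodule.span F ((L i : Set V)) = ⊤
  strict : ∀ i, L (i + 1) < L i
  smul_eq : ∀ (i : ℤ) (x : V), x ∈ L (i + e) ↔ ∃ y ∈ L i, x = (ϖ : F) • y

/-- The hereditary order `𝔄(L) = {a ∈ End_F V : a (L i) ⊆ L i for all i}`. -/
def hereditaryOrder (O : ValuationSubring F) (L : ℤ → Submodule O V) :
    Subring (Module.End F V) where
  carrier := {a | ∀ i, ∀ x ∈ L i, a x ∈ L i}
  zero_mem' := fun i x _ => by simpa using (L i).zero_mem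
  one_mem' := fun i x hx => by simpa using hx
  add_mem' := fun {a b} ha hb i x hx => by
    simpa using (L i).add_mem (ha i x hx) (hb i x hx)
  neg_mem' := fun {a} ha i x hx => by simpa using (L i).neg_mem (ha i x hx)
  mul_mem' := fun {a b} ha hb i x hx => by
    simpa [Module.End.mul_apply] using ha i _ (hb i x hx)

lemma mem_hereditaryOrder {O : ValuationSubring F} {L : ℤ → Submodule O V}
    {a : Module.End F V} :
    a ∈ hereditaryOrder O L ↔ ∀ i, ∀ x ∈ L i, a x ∈ L i := Iff.rfl

/-- The radical `𝔓(L) = {a ∈ End_F V : a (L i) ⊆ L (i+1) for all i}`, as a set. -/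
def radicalSet (O : ValuationSubring F) (L : ℤ → Submodule O V) :
    Set (Module.End F V) :=
  {a | ∀ i, ∀ x ∈ L i, a x ∈ L (i + 1)}

/-- The unit group `U(𝔄(L)) = 𝔄(L)ˣ` of the hereditary order, as a set of
endomorphisms: the elements of `𝔄(L)` invertible in `𝔄(L)`. -/
def orderUnits (O : ValuationSubring F) (L : ℤ → Submodule O V) :
    Set (Module.End F V) :=
  {a | a ∈ hereditaryOrder O L ∧ ∃ b ∈ hereditaryOrder O L, a * b = 1 ∧ b * a = 1}

/-- The unit group `U(𝔄(L)) = 𝔄(L)ˣ`, as a subgroup of `G = GL_F(V)`. -/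
def unitGroup (O : ValuationSubring F) (L : ℤ → Submodule O V) :
    Subgroup (Module.End F V)ˣ where
  carrier := {u | ↑u ∈ hereditaryOrder O L ∧ ↑u⁻¹ ∈ hereditaryOrder O L}
  one_mem' := ⟨one_mem _, by simpa using one_mem (hereditaryOrder O L)⟩
  mul_mem' := fun {a b} ha hb => ⟨mul_mem ha.1 hb.1, by
    rw [mul_inv_rev]; exact mul_mem hb.2 ha.2⟩
  inv_mem' := fun {a} ha => ⟨ha.2, by simpa using ha.1⟩

lemma mem_unitGroup {O : ValuationSubring F} {L : ℤ → Submodule O V}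
    {u : (Module.End F V)ˣ} :
    u ∈ unitGroup O L ↔
      (u : Module.End F V) ∈ hereditaryOrder O L ∧
        ((u⁻¹ : (Module.End F V)ˣ) : Module.End F V) ∈ hereditaryOrder O L := Iff.rfl

/-- Conjugation `g S g⁻¹` of a set of endomorphisms by an element `g ∈ GL_F(V)`. -/
def conjIm (g : (Module.End F V)ˣ) (S : Set (Module.End F V)) : Set (Module.End F V) :=
  (fun a => (g : Module.End F V) * a * ((g⁻¹ : (Module.End F V)ˣ) : Module.End F V)) '' S

lemma IsLatticeChain.antitone {O : ValuationSubring F} {ϖ : O} {L : ℤ → Submodule O V}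
    {e : ℕ} (hL : IsLatticeChain O ϖ L e) : Antitone L :=
  antitone_int_of_succ_le fun i => (hL.strict i).le

lemma IsLatticeChain.smul_mem_succ {O : ValuationSubring F} {ϖ : O} {L : ℤ → Submodule O V}
    {e : ℕ} (hL : IsLatticeChain O ϖ L e) (i : ℤ) {x : V} (hx : x ∈ L i) :
    (ϖ : F) • x ∈ L (i + 1) := by
  have h1 : (ϖ : F) • x ∈ L (i + e) := (hL.smul_eq i _).2 ⟨x, hx, rfl⟩
  have h2 : (i + 1 : ℤ) ≤ i + e := by have := hL.period_pos; omega
  exact hL.antitone h2 h1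

variable [FiniteDimensional F V] [Nontrivial V]
variable (OF : ValuationSubring F) [IsDiscreteValuationRing OF]
  [Finite (IsLocalRing.ResidueField OF)] (ϖF : OF)

section Per
variable {O : ValuationSubring F} {ϖ : O} {L : ℤ → Submodule O V} {e : ℕ}
  (hL : IsLatticeChain O ϖ L e) (hϖ : Irreducible ϖ)

include hL hϖ in
lemma IsLatticeChain.zpow_smul_eq (q : ℤ) (i : ℤ) :
    ∀ x : V, x ∈ L (i + q * e) ↔ ∃ y ∈ L i, x = (ϖ : F) ^ q • y := by
  have hϖ0 : (ϖ : F) ≠ 0 := by exact_mod_cast hϖ.ne_zero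
  have ps : ∀ (a b : ℤ) (v : V), (ϖ : F) ^ a • (ϖ : F) ^ b • v = (ϖ : F) ^ (a + b) • v :=
    fun a b v => by rw [smul_smul, ← zpow_add₀ hϖ0]
  have p1 : ∀ v : V, (ϖ : F) • v = (ϖ : F) ^ (1 : ℤ) • v := fun v => by simp
  induction q using Int.induction_on with
  | zero => simp
  | succ n ih =>
    intro x
    have h1 : (i + ((n : ℤ) + 1) * e) = (i + n * e) + e := by ring
    rw [h1, hL.smul_eq]
    constructor
    · rintro ⟨y, hy, rfl⟩
      obtain ⟨w, hw, rfl⟩ := (ih y).mp hy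
      exact ⟨w, hw, by rw [p1, ps, add_comm]⟩
    · rintro ⟨w, hw, hx⟩
      refine ⟨(ϖ : F) ^ (n : ℤ) • w, (ih _).mpr ⟨w, hw, rfl⟩, ?_⟩
      rw [hx, p1, ps, add_comm]
  | pred n ih =>
    intro x
    rw [show (-(n:ℤ) - 1) = -((n:ℤ)+1) from by ring]
    have K : ∀ z : V, z ∈ L (i + (-(n : ℤ)) * e) ↔
        ∃ w ∈ L (i + (-((n : ℤ) + 1)) * e), z = (ϖ : F) • w := by
      intro z
      have h2 : (i + (-(n : ℤ)) * e) = (i + (-((n : ℤ) + 1)) * e) + e := by ring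
      rw [h2, hL.smul_eq]
    constructor
    · intro hx
      have h3 : (ϖ : F) • x ∈ L (i + (-(n : ℤ)) * e) := (K _).mpr ⟨x, hx, rfl⟩
      obtain ⟨y, hy, hxy⟩ := (ih _).mp h3
      refine ⟨y, hy, ?_⟩
      have h5 : (ϖ : F) • ((ϖ : F) ^ (-((n : ℤ) + 1)) • y) = (ϖ : F) • x := by
        rw [p1, ps, show (1 + -((n:ℤ)+1)) = -(n:ℤ) from by ring, ← hxy]
      exact (smul_right_injective V hϖ0 h5).symm
    · rintro ⟨y, hy, rfl⟩
      have h5 : (ϖ : F) • ((ϖ : F) ^ (-((n : ℤ) + 1)) • y) ∈ L (i + (-(n : ℤ)) * e) := by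
        rw [p1, ps, show (1 + -((n:ℤ)+1)) = -(n:ℤ) from by ring]
        exact (ih _).mpr ⟨y, hy, rfl⟩
      obtain ⟨w, hw, hww⟩ := (K _).mp h5
      rw [smul_right_injective V hϖ0 hww]
      exact hw
end Per

section Mem
variable {O : ValuationSubring F} [IsDiscreteValuationRing O] {ϖ : O}
  {L : ℤ → Submodule O V} {e : ℕ}
  (hL : IsLatticeChain O ϖ L e) (hϖ : Irreducible ϖ)

include hϖ in
lemma exists_pow_mul_mem (f : F) : ∃ (n : ℕ) (c : O), (ϖ : F) ^ n * f = c := by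
  rcases eq_or_ne f 0 with rfl | hf
  · exact ⟨0, 0, by simp⟩
  rcases O.mem_or_inv_mem f with h | h
  · exact ⟨0, ⟨f, h⟩, by simp⟩
  · have hc0 : (⟨f⁻¹, h⟩ : O) ≠ 0 := by
      simp only [ne_eq, Subtype.ext_iff]
      simpa using inv_ne_zero hf
    obtain ⟨n, u, hu⟩ := IsDiscreteValuationRing.associated_pow_irreducible hc0 hϖ
    refine ⟨n, (u : O), ?_⟩
    have h1 : (f⁻¹ : F) * ((u : O) : F) = (ϖ : F) ^ n := by
      have := congrArg (fun c : O => (c : F)) hu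
      push_cast at this
      exact this
    rw [← h1, mul_comm (f⁻¹) _, mul_assoc, inv_mul_cancel₀ hf, mul_one]

include hL hϖ in
lemma IsLatticeChain.exists_mem (v : V) : ∃ j : ℤ, v ∈ L j := by
  have hU : ∀ v ∈ Submodule.span F (L 0 : Set V), ∃ j : ℤ, v ∈ L j := by
    intro v hv
    induction hv using Submodule.span_induction with
    | mem x hx => exact ⟨0, hx⟩
    | zero => exact ⟨0, Submodule.zero_mem _⟩
    | add x y _ _ hx hy =>
      obtain ⟨j₁, h₁⟩ := hx
      obtain ⟨j₂, h₂⟩ := hy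
      exact ⟨min j₁ j₂, Submodule.add_mem _ (hL.antitone (min_le_left _ _) h₁)
        (hL.antitone (min_le_right _ _) h₂)⟩
    | smul f x _ hx =>
      obtain ⟨j, hj⟩ := hx
      obtain ⟨n, c, hc⟩ := exists_pow_mul_mem hϖ f
      refine ⟨j + (-(n : ℤ)) * e, ?_⟩
      have hx' : f • x = (ϖ : F) ^ (-(n : ℤ)) • ((c : F) • x) := by
        rw [smul_smul, ← hc]
        have hϖ0 : (ϖ : F) ≠ 0 := by exact_mod_cast hϖ.ne_zero
        rw [← mul_assoc, zpow_neg, zpow_natCast, inv_mul_cancel₀ (pow_ne_zero _ hϖ0), one_mul]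
      rw [hx']
      exact (hL.zpow_smul_eq hϖ _ _ _).mpr ⟨(c : F) • x, Submodule.smul_mem _ c hj, rfl⟩
  exact hU v (by rw [hL.spans 0]; trivial)
include hL hϖ in
lemma IsLatticeChain.bounded_dual (φ : Module.Dual F V) (i : ℤ) :
    ∃ N : ℕ, ∀ w ∈ L i, ∃ c : O, (ϖ : F) ^ N * φ w = c := by
  obtain ⟨s, hs⟩ := hL.fg i
  have hn : ∀ x : V, ∃ n : ℕ, ∃ c : O, (ϖ : F) ^ n * φ x = c := fun x =>
    exists_pow_mul_mem hϖ (φ x)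
  choose n cf hcf using hn
  refine ⟨s.sup n, ?_⟩
  have key : ∀ w ∈ Submodule.span O (s : Set V), ∃ c : O, (ϖ : F) ^ (s.sup n) * φ w = c := by
    intro w hw
    induction hw using Submodule.span_induction with
    | mem x hx =>
      refine ⟨(ϖ ^ (s.sup n - n x)) * cf x, ?_⟩
      have hle : n x ≤ s.sup n := Finset.le_sup hx
      push_cast
      rw [← hcf x, ← mul_assoc, ← pow_add]
      congr 2
      omega
    | zero => exact ⟨0, by simp⟩
    | add x y _ _ hx hy =>
      obtain ⟨c₁, h₁⟩ := hx
      obtain ⟨c₂, h₂⟩ := hy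
      exact ⟨c₁ + c₂, by push_cast [map_add, mul_add, h₁, h₂]; ring⟩
    | smul a x _ hx =>
      obtain ⟨c, hc⟩ := hx
      refine ⟨a * c, ?_⟩
      have : φ (a • x) = (a : F) * φ x := by
        have : a • x = (a : F) • x := rfl
        rw [this, map_smul, smul_eq_mul]
      push_cast [this]
      rw [← hc]; ring
  intro w hw
  exact key w (hs ▸ hw)

include hL hϖ in
lemma IsLatticeChain.exists_not_mem {v : V} (hv : v ≠ 0) : ∃ j : ℤ, v ∉ L j := by
  by_contra hcon
  push_neg at hcon
  obtain ⟨φ₀, hφ₀⟩ : ∃ φ : Module.Dual F V, φ v ≠ 0 := by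
    by_contra hc
    push_neg at hc
    exact hv ((Module.forall_dual_apply_eq_zero_iff F v).mp hc)
  set φ : Module.Dual F V := (φ₀ v)⁻¹ • φ₀ with hφdef
  have hφv : φ v = 1 := by simp [hφdef, inv_mul_cancel₀ hφ₀]
  obtain ⟨N, hN⟩ := hL.bounded_dual hϖ φ 0
  have hϖ0 : (ϖ : F) ≠ 0 := by exact_mod_cast hϖ.ne_zero
  have hv' : v ∈ L (0 + ((N : ℤ) + 1) * e) := hcon _
  obtain ⟨w, hw, hvw⟩ := (hL.zpow_smul_eq hϖ _ _ v).mp hv'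
  obtain ⟨c, hc⟩ := hN w hw
  have h1 : (1 : F) = (ϖ : F) * (c : F) := by
    have := congrArg φ hvw
    rw [hφv, map_smul, smul_eq_mul] at this
    rw [this, ← hc]
    rw [show ((N : ℤ) + 1) = ((N + 1 : ℕ) : ℤ) from by push_cast; ring, zpow_natCast]
    ring
  have h2 : ϖ * c = 1 := by
    have : ((ϖ * c : O) : F) = ((1 : O) : F) := by push_cast; rw [← h1]
    exact_mod_cast this
  exact hϖ.not_isUnit (IsUnit.of_mul_eq_one _ h2)
end Mem

section Dual
variable {O : ValuationSubring F} [IsDiscreteValuationRing O] {ϖ : O}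

instance (O : ValuationSubring F) : IsScalarTower O F V :=
  ⟨fun c f v => by show ((c : F) * f) • v = (c : F) • (f • v); rw [mul_smul]⟩

instance (O : ValuationSubring F) : NoZeroSMulDivisors O V := by
  constructor
  intro c v h
  rcases eq_or_ne c 0 with rfl | hc
  · exact Or.inl rfl
  · right
    have h' : (c : F) • v = 0 := h
    have hc' : (c : F) ≠ 0 := by exact_mod_cast hc
    simpa [hc'] using h'

lemma exists_functional (hϖ : Irreducible ϖ) (M : Submodule O V) (hfg : M.FG)
    (hsp : Submodule.span F (M : Set V) = ⊤) {x : V} (hx : x ∈ M)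
    (hxd : ¬ ∃ y ∈ M, x = (ϖ : F) • y) :
    ∃ φ : V →ₗ[F] F, φ x = 1 ∧ ∀ z ∈ M, ∃ c : O, φ z = c := by
  haveI : Module.Finite O M := Module.Finite.iff_fg.mpr hfg
  haveI : NoZeroSMulDivisors O M := by
    constructor
    intro c m h
    have h' : c • (m : V) = 0 := by
      have := congrArg (fun t : M => (t : V)) h
      simpa using this
    rcases smul_eq_zero.mp h' with h0 | h0
    · exact Or.inl h0
    · exact Or.inr (by ext; simpa using h0)
  haveI : Module.Free O M := Module.free_of_finite_type_torsion_free'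
  set ι := Module.Free.ChooseBasisIndex O M
  set b := Module.Free.chooseBasis O M with hb
  set v : ι → V := fun i => (b i : V) with hv
  have hOi : LinearIndependent O v := b.linearIndependent.map' M.subtype M.ker_subtype
  have hFi : LinearIndependent F v := (LinearIndependent.iff_fractionRing O F).mp hOi
  have hsub : (M : Set V) ⊆ ↑(Submodule.span F (Set.range v)) := by
    intro z hz
    have h1 : (⟨z, hz⟩ : M) = ∑ i, b.repr ⟨z, hz⟩ i • b i := (b.sum_repr _).symm
    have h2 : z = ∑ i, ((b.repr ⟨z, hz⟩ i : F)) • v i := by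
      have := congrArg (fun m : M => (m : V)) h1
      simp only [Submodule.coe_sum] at this
      exact this
    rw [h2]
    exact Submodule.sum_mem _ fun i _ =>
      Submodule.smul_mem _ _ (Submodule.subset_span (Set.mem_range_self i))
  have hspv : ⊤ ≤ Submodule.span F (Set.range v) := by
    rw [← hsp]
    exact Submodule.span_le.mpr hsub
  set B : Module.Basis ι F V := Module.Basis.mk hFi hspv with hB
  have hBv : ∀ i, B i = v i := fun i => Module.Basis.mk_apply hFi hspv i
  have hco : ∀ z (hz : z ∈ M) (i : ι), B.repr z i = (b.repr ⟨z, hz⟩ i : F) := by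
    intro z hz i
    have h2 : z = ∑ j, ((b.repr ⟨z, hz⟩ j : F)) • B j := by
      have := congrArg (fun m : M => (m : V)) ((b.sum_repr ⟨z, hz⟩).symm)
      simp only [hBv]
      simp only [Submodule.coe_sum] at this
      exact this
    conv_lhs => rw [h2]
    simp [map_sum, Module.Basis.repr_self, Finsupp.single_apply]
  -- not all coordinates of x divisible by ϖ
  have hex : ∃ i₀ : ι, ¬ (ϖ ∣ b.repr ⟨x, hx⟩ i₀) := by
    by_contra hall
    push_neg at hall
    choose d hd using hall
    apply hxd
    refine ⟨(∑ i, d i • b i : M), Submodule.coe_mem _, ?_⟩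
    have h1 : (⟨x, hx⟩ : M) = ∑ i, b.repr ⟨x, hx⟩ i • b i := (b.sum_repr _).symm
    have h2 : x = ∑ i, ((b.repr ⟨x, hx⟩ i : F)) • v i := by
      have := congrArg (fun m : M => (m : V)) h1
      simp only [Submodule.coe_sum] at this
      exact this
    have h3 : ((∑ i, d i • b i : M) : V) = ∑ i, ((d i : F)) • v i := by
      simp only [Submodule.coe_sum]
      exact Finset.sum_congr rfl fun i _ => rfl
    rw [h2, h3, Finset.smul_sum]
    refine Finset.sum_congr rfl fun i _ => ?_
    rw [hd i, smul_smul]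
    push_cast
    ring_nf
  obtain ⟨i₀, hi₀⟩ := hex
  set cx := b.repr ⟨x, hx⟩ i₀ with hcx
  have hunit : IsUnit cx := by
    by_contra hnu
    apply hi₀
    have hmem : cx ∈ IsLocalRing.maximalIdeal O := hnu
    rw [hϖ.maximalIdeal_eq] at hmem
    exact Ideal.mem_span_singleton.mp hmem
  obtain ⟨w, hw⟩ := hunit
  have hcxne : cx ≠ 0 := hw ▸ w.ne_zero
  have hcx0 : (cx : F) ≠ 0 := fun h => hcxne (by exact_mod_cast h)
  have hwinv : (((w⁻¹ : Oˣ) : O) : F) = ((cx : F))⁻¹ := by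
    refine eq_inv_of_mul_eq_one_left ?_
    have : ((w⁻¹ : Oˣ) : O) * cx = 1 := by rw [← hw]; exact_mod_cast w.inv_mul
    exact_mod_cast congrArg (fun c : O => (c : F)) this
  refine ⟨((cx : F))⁻¹ • B.coord i₀, ?_, ?_⟩
  · simp only [LinearMap.smul_apply, Module.Basis.coord_apply, smul_eq_mul]
    rw [hco x hx i₀, ← hcx, inv_mul_cancel₀ hcx0]
  · intro z hz
    refine ⟨(w⁻¹ : Oˣ) * b.repr ⟨z, hz⟩ i₀, ?_⟩
    simp only [LinearMap.smul_apply, Module.Basis.coord_apply, smul_eq_mul]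
    rw [hco z hz i₀]
    push_cast [← hwinv]
    ring
end Dual

section Endo
variable {O : ValuationSubring F} [IsDiscreteValuationRing O] {ϖ : O}
  {L : ℤ → Submodule O V} {e : ℕ}
  (hL : IsLatticeChain O ϖ L e) (hϖ : Irreducible ϖ)

include hL hϖ in
lemma IsLatticeChain.exists_endo {j : ℤ} {x y : V} (hxj : x ∈ L j)
    (hxj1 : x ∉ L (j + 1)) (hyj : y ∈ L j) :
    ∃ a : Module.End F V, (∀ i, ∀ z ∈ L i, a z ∈ L i) ∧ a x = y := by
  have he : (0 : ℤ) < (e : ℤ) := by exact_mod_cast hL.period_pos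
  set M := L (j + 1 - e) with hMdef
  have hM1 : ∀ z : V, z ∈ L (j + 1) ↔ ∃ w ∈ M, z = (ϖ : F) • w := by
    intro z
    have h0 : (j + 1 : ℤ) = (j + 1 - e) + e := by ring
    rw [h0, hL.smul_eq]
  have hxM : x ∈ M := hL.antitone (by omega) hxj
  have hxd : ¬ ∃ w ∈ M, x = (ϖ : F) • w := fun hc => hxj1 ((hM1 x).mpr hc)
  obtain ⟨φ, hφx, hφM⟩ := exists_functional hϖ M (hL.fg _) (hL.spans _) hxM hxd
  refine ⟨LinearMap.smulRight φ y, ?_, by simp [hφx]⟩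
  intro i z hz
  set a0 : ℤ := i - j - 1 + e with ha0
  set q : ℤ := a0 / e with hq
  have hr1 : 0 ≤ a0 % e := Int.emod_nonneg a0 (ne_of_gt he)
  have hr2 : a0 % e < e := Int.emod_lt_of_pos a0 he
  have hqe : e * q + a0 % e = a0 := Int.mul_ediv_add_emod a0 e
  have hA : q * (e : ℤ) ≤ i - j - 1 + e := by rw [mul_comm]; linarith
  have hB : i - j ≤ q * (e : ℤ) := by rw [mul_comm]; linarith
  have hz' : z ∈ L ((j + 1 - e) + q * e) := hL.antitone (by omega) hz
  obtain ⟨w, hw, rfl⟩ := (hL.zpow_smul_eq hϖ q _ z).mp hz'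
  obtain ⟨c, hc⟩ := hφM w hw
  have hφz : φ ((ϖ : F) ^ q • w) = (ϖ : F) ^ q * (c : F) := by
    rw [map_smul, smul_eq_mul, hc]
  have hay : (LinearMap.smulRight φ y) ((ϖ : F) ^ q • w)
      = (c : F) • ((ϖ : F) ^ q • y) := by
    rw [LinearMap.smulRight_apply, hφz, smul_smul, mul_comm]
  rw [hay]
  have h1 : (ϖ : F) ^ q • y ∈ L (j + q * e) :=
    (hL.zpow_smul_eq hϖ q j _).mpr ⟨y, hyj, rfl⟩
  have h2 : (ϖ : F) ^ q • y ∈ L i := hL.antitone (by omega) h1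
  exact Submodule.smul_mem _ c h2

include hL hϖ in
lemma IsLatticeChain.eq_of_stable [Nontrivial V] (M : Submodule O V) (hfg : M.FG)
    (hsp : Submodule.span F (M : Set V) = ⊤)
    (hstab : ∀ a : Module.End F V, (∀ i, ∀ z ∈ L i, a z ∈ L i) → ∀ z ∈ M, a z ∈ M) :
    ∃ j : ℤ, M = L j := by
  have hne : M ≠ ⊥ := by
    rintro rfl
    rw [show ((⊥ : Submodule O V) : Set V) = ↑(⊥ : Submodule F V) from rfl,
      Submodule.span_eq] at hsp
    exact absurd hsp bot_ne_top
  -- lower bound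
  have hlow : ∃ j₀ : ℤ, M ≤ L j₀ := by
    obtain ⟨s, hs⟩ := hfg
    rcases s.eq_empty_or_nonempty with rfl | hsne
    · exfalso
      apply hne
      rw [← hs]
      simp
    · choose jf hjf using fun x : V => hL.exists_mem hϖ x
      refine ⟨s.inf' hsne jf, ?_⟩
      rw [← hs, Submodule.span_le]
      intro x hx
      exact hL.antitone (Finset.inf'_le jf hx) (hjf x)
  obtain ⟨xv, hxvM, hxv0⟩ := Submodule.exists_mem_ne_zero_of_ne_bot hne
  obtain ⟨J, hJ⟩ := hL.exists_not_mem hϖ hxv0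
  have hbdd : ∀ z : ℤ, M ≤ L z → z ≤ J := by
    intro z hz
    by_contra hc
    exact hJ (hL.antitone (by omega) (hz hxvM))
  obtain ⟨j, hMj, hmax⟩ := Int.exists_greatest_of_bdd ⟨J, hbdd⟩ hlow
  have hnot : ¬ M ≤ L (j + 1) := fun h => by have := hmax _ h; omega
  obtain ⟨x, hxM, hxj1⟩ := SetLike.not_le_iff_exists.mp hnot
  have hxj : x ∈ L j := hMj hxM
  refine ⟨j, le_antisymm hMj ?_⟩
  intro y hy
  obtain ⟨a, ha, hax⟩ := hL.exists_endo hϖ hxj hxj1 hy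
  exact hax ▸ hstab a ha x hxM
end Endo

/-- `g ∈ G` normalizes `𝔄(L)` iff `g` shifts the chain `L` by some
integer `k`: `g (L i) = L (i + k)` for all `i`. -/
theorem normalizes_hereditaryOrder_iff_shifts
    (hϖF : Irreducible ϖF)
    (L : ℤ → Submodule OF V) (e : ℕ) (hL : IsLatticeChain OF ϖF L e)
    (g : (Module.End F V)ˣ) :
    conjIm g (hereditaryOrder OF L : Set (Module.End F V))
        = (hereditaryOrder OF L : Set (Module.End F V))
      ↔ ∃ k : ℤ, ∀ i, (fun v => (g : Module.End F V) v) '' (L i : Set V)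
          = (L (i + k) : Set V) := by
  set gl : Module.End F V := (g : Module.End F V) with hgl
  set gi : Module.End F V := ((g⁻¹ : (Module.End F V)ˣ) : Module.End F V) with hgi
  have hig : gi * gl = 1 := by rw [hgl, hgi]; exact g.inv_mul
  have hgig : gl * gi = 1 := by rw [hgl, hgi]; exact g.mul_inv
  have hcancel1 : ∀ x : V, gi (gl x) = x := by
    intro x
    rw [← Module.End.mul_apply, hig, Module.End.one_apply]
  have hcancel2 : ∀ x : V, gl (gi x) = x := by
    intro x
    rw [← Module.End.mul_apply, hgig, Module.End.one_apply]
  constructor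
  · -- normalizer ⇒ shift
    intro h
    have hconj1 : ∀ a : Module.End F V, a ∈ hereditaryOrder OF L →
        gi * a * gl ∈ hereditaryOrder OF L := by
      intro a ha
      have ha' : a ∈ conjIm g (hereditaryOrder OF L : Set (Module.End F V)) := by
        rw [h]; exact ha
      obtain ⟨b, hb, hba⟩ := ha'
      have : gi * a * gl = b := by
        rw [← hba]
        show gi * (gl * b * gi) * gl = b
        rw [mul_assoc gl b gi, ← mul_assoc gi gl (b * gi), hig, one_mul, mul_assoc,
          hig, mul_one]
      rw [this]; exact hb
    -- the O-linear version of g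
    set gO : V →ₗ[OF] V :=
      { toFun := fun v => gl v
        map_add' := fun u v => map_add gl u v
        map_smul' := fun c v => by
          show gl ((c : F) • v) = (c : F) • gl v
          exact map_smul gl _ v } with hgO
    have hginj : Function.Injective gO := by
      intro u v huv
      have : gi (gl u) = gi (gl v) := congrArg gi huv
      rwa [hcancel1, hcancel1] at this
    have hstab : ∀ i : ℤ, ∃ j, Submodule.map gO (L i) = L j := by
      intro i
      apply hL.eq_of_stable hϖF
      · exact (hL.fg i).map gO
      · have h1 : (Submodule.map gO (L i) : Set V) = gl '' (L i : Set V) := rfl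
        rw [h1, Submodule.span_image, hL.spans i, Submodule.map_top, LinearMap.range_eq_top]
        intro v
        exact ⟨gi v, hcancel2 v⟩
      · intro a ha z hz
        obtain ⟨w, hw, rfl⟩ := hz
        have hb : gi * a * gl ∈ hereditaryOrder OF L :=
          hconj1 a (mem_hereditaryOrder.mpr ha)
        have hbw : (gi * a * gl) w ∈ L i := hb i w hw
        have hcalc : a (gO w) = gO ((gi * a * gl) w) := by
          show a (gl w) = gl ((gi * a * gl) w)
          rw [Module.End.mul_apply, Module.End.mul_apply, hcancel2]
        rw [hcalc]
        exact Submodule.mem_map_of_mem hbw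
    choose σ hσ using hstab
    have hanti : StrictAnti L := strictAnti_int_of_succ_lt hL.strict
    have hLinj : Function.Injective L := hanti.injective
    have hσlt : ∀ i i' : ℤ, i < i' → σ i < σ i' := by
      intro i i' hii
      have h1 : L i' < L i := hanti hii
      have h2 : Submodule.map gO (L i') < Submodule.map gO (L i) := by
        refine lt_of_le_of_ne (Submodule.map_mono h1.le) ?_
        intro heq
        exact h1.ne (Submodule.map_injective_of_injective hginj heq)
      rw [hσ i, hσ i'] at h2
      by_contra hc
      push_neg at hc
      exact h2.not_ge (hanti.antitone hc)
    have hshift : ∀ i, σ (i + e) = σ i + e := by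
      intro i
      apply hLinj
      rw [← hσ (i + e)]
      ext z
      constructor
      · rintro ⟨x, hx, rfl⟩
        obtain ⟨w, hw, rfl⟩ := (hL.smul_eq i x).mp hx
        have h1 : gO ((ϖF : F) • w) = (ϖF : F) • gl w := map_smul gl _ w
        rw [h1]
        refine (hL.smul_eq (σ i) _).mpr ⟨gl w, ?_, rfl⟩
        rw [← hσ i]
        exact Submodule.mem_map_of_mem hw
      · intro hz
        obtain ⟨u, hu, rfl⟩ := (hL.smul_eq (σ i) z).mp hz
        rw [← hσ i] at hu
        obtain ⟨w, hw, rfl⟩ := hu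
        have h1 : (ϖF : F) • gO w = gO ((ϖF : F) • w) := (map_smul gl ((ϖF : F)) w).symm
        rw [h1]
        exact Submodule.mem_map_of_mem ((hL.smul_eq i _).mpr ⟨w, hw, rfl⟩)
    have hmono_le : ∀ (i : ℤ) (t : ℕ), σ i + t ≤ σ (i + t) := by
      intro i t
      induction t with
      | zero => simp
      | succ n ih =>
        have h1 : σ (i + n) < σ (i + n + 1) := hσlt _ _ (by omega)
        have h2 : (i + (n + 1 : ℕ) : ℤ) = i + n + 1 := by push_cast; ring
        rw [h2]
        omega
    have hsucc : ∀ i, σ (i + 1) = σ i + 1 := by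
      intro i
      have h1 : σ i < σ (i + 1) := hσlt _ _ (by omega)
      have he1 : 1 ≤ e := hL.period_pos
      have h2 : σ (i + 1) + ((e - 1 : ℕ) : ℤ) ≤ σ (i + 1 + ((e - 1 : ℕ) : ℤ)) :=
        hmono_le (i + 1) (e - 1)
      have h3 : (i + 1 + ((e - 1 : ℕ) : ℤ)) = i + e := by push_cast; omega
      rw [h3, hshift i] at h2
      have h4 : ((e - 1 : ℕ) : ℤ) = (e : ℤ) - 1 := by push_cast; omega
      omega
    have hlin : ∀ i, σ i = i + σ 0 := by
      intro i
      induction i using Int.induction_on with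
      | zero => simp
      | succ n ih => rw [hsucc, ih]; ring
      | pred n ih =>
        have h1 := hsucc (-(n : ℤ) - 1)
        rw [show (-(n : ℤ) - 1 + 1) = -(n : ℤ) from by ring, ih] at h1
        omega
    refine ⟨σ 0, fun i => ?_⟩
    have h1 : (fun v => gl v) '' (L i : Set V) = ↑(Submodule.map gO (L i)) := rfl
    rw [h1, hσ i, hlin i]
  · -- shift ⇒ normalizer
    rintro ⟨k, hk⟩
    have hgmem : ∀ i : ℤ, ∀ x ∈ L i, gl x ∈ L (i + k) := by
      intro i x hx
      have : gl x ∈ (fun v => gl v) '' (L i : Set V) := Set.mem_image_of_mem _ hx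
      rw [hk i] at this
      exact this
    have hgimem : ∀ i : ℤ, ∀ x ∈ L i, gi x ∈ L (i - k) := by
      intro i x hx
      have h1 : x ∈ (fun v => gl v) '' (L (i - k) : Set V) := by
        rw [hk (i - k), sub_add_cancel]
        exact hx
      obtain ⟨w, hw, rfl⟩ := h1
      rw [hcancel1]
      exact hw
    apply Set.Subset.antisymm
    · rintro _ ⟨a, ha, rfl⟩
      have ha' : a ∈ hereditaryOrder OF L := ha
      show gl * a * gi ∈ hereditaryOrder OF L
      intro i z hz
      have h1 : gi z ∈ L (i - k) := hgimem i z hz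
      have h2 : a (gi z) ∈ L (i - k) := ha' _ _ h1
      have h3 : gl (a (gi z)) ∈ L (i - k + k) := hgmem _ _ h2
      rw [sub_add_cancel] at h3
      show (gl * a * gi) z ∈ L i
      rw [Module.End.mul_apply, Module.End.mul_apply]
      exact h3
    · intro a ha
      have ha' : a ∈ hereditaryOrder OF L := ha
      refine ⟨gi * a * gl, ?_, ?_⟩
      · show gi * a * gl ∈ hereditaryOrder OF L
        intro i z hz
        have h1 : gl z ∈ L (i + k) := hgmem i z hz
        have h2 : a (gl z) ∈ L (i + k) := ha' _ _ h1
        have h3 : gi (a (gl z)) ∈ L (i + k - k) := hgimem _ _ h2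
        rw [add_sub_cancel_right] at h3
        show (gi * a * gl) z ∈ L i
        rw [Module.End.mul_apply, Module.End.mul_apply]
        exact h3
      · show gl * (gi * a * gl) * gi = a
        rw [mul_assoc gi a gl, ← mul_assoc gl gi (a * gl), hgig, one_mul, mul_assoc,
          hgig, mul_one]

end
end

section
/- Let L and L′ be 𝒪_F-lattice chains in V. Then 𝔄(L) ⊆ 𝔄(L′) if and only if every lattice occurring in the chain L′ occurs in the chain L, i.e. {L′(i) : i ∈ ℤ} ⊆ {L(i) : i ∈ ℤ}. Moreover, if 𝔄(L) ⊆ 𝔄(L′) then 𝔓(L′) ⊆ 𝔓(L). -/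
/-!
Context: `F` is a nonarchimedean local field, modelled as a field together with a
valuation subring `OF` which is a discrete valuation ring with finite residue field,
with a fixed uniformizer `ϖF` (an irreducible element of `OF`).  `V` is a nonzero
finite-dimensional `F`-vector space, `A = End_F V` and `G = GL_F(V) = (End_F V)ˣ`.
-/

noncomputable section

variable {F : Type*} [Field F] {V : Type*} [AddCommGroup V] [Module F V]

section Aux
variable {F : Type*} [Field F] {V : Type*} [AddCommGroup V] [Module F V]
variable {O : ValuationSubring F}

lemma osmul_def (c : O) (v : V) : c • v = (c : F) • v := rfl

instance : IsScalarTower O F V := ⟨fun c f v => by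
  show ((c : F) * f) • v = (c : F) • (f • v); rw [mul_smul]⟩

namespace IsLatticeChain

variable {ϖ : O} {L : ℤ → Submodule O V} {e : ℕ}

lemma coe_ne_zero (hϖ : Irreducible ϖ) : (ϖ : F) ≠ 0 := by
  intro h
  exact hϖ.ne_zero (by exact_mod_cast h)

lemma strictAnti (hL : IsLatticeChain O ϖ L e) : StrictAnti L :=
  strictAnti_int_of_succ_lt fun i => hL.strict i

lemma lt_of_lt (hL : IsLatticeChain O ϖ L e) {i j : ℤ} (h : L i < L j) : j < i := by
  by_contra hc
  push_neg at hc
  rcases eq_or_lt_of_le hc with rfl | h'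
  · exact lt_irrefl _ h
  · exact absurd (hL.strictAnti h') (LE.le.not_gt h.le)

lemma index_le_of_le (hL : IsLatticeChain O ϖ L e) {i j : ℤ} (h : L i ≤ L j) : j ≤ i := by
  by_contra hc
  push_neg at hc
  exact absurd (hL.strictAnti hc) (LE.le.not_gt h)

lemma injective (hL : IsLatticeChain O ϖ L e) : Function.Injective L :=
  hL.strictAnti.injective

/-- membership in `L (i+e)` via a designated element of `L i`. -/
lemma smul_mem_of_mem (hL : IsLatticeChain O ϖ L e) {i : ℤ} {y : V} (hy : y ∈ L i) :
    (ϖ : F) • y ∈ L (i + e) :=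
  (hL.smul_eq i _).2 ⟨y, hy, rfl⟩

lemma inv_smul_mem (hL : IsLatticeChain O ϖ L e) (hϖ : Irreducible ϖ) {i : ℤ} {x : V}
    (hx : x ∈ L (i + e)) : ((ϖ : F))⁻¹ • x ∈ L i := by
  obtain ⟨y, hy, rfl⟩ := (hL.smul_eq i x).1 hx
  rw [inv_smul_smul₀ (coe_ne_zero hϖ)]
  exact hy

end IsLatticeChain
end Aux
section Aux2
variable {F : Type*} [Field F] {V : Type*} [AddCommGroup V] [Module F V]
variable {O : ValuationSubring F}

namespace IsLatticeChain

variable {ϖ : O} {L : ℤ → Submodule O V} {e : ℕ}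

lemma mem_pow_iff (hL : IsLatticeChain O ϖ L e) (i : ℤ) (k : ℕ) (x : V) :
    x ∈ L (i + k * e) ↔ ∃ y ∈ L i, x = ((ϖ : F)) ^ k • y := by
  induction k generalizing x with
  | zero => simp
  | succ k ih =>
    have : i + (k + 1 : ℕ) * e = (i + k * e) + e := by push_cast; ring
    rw [this, hL.smul_eq]
    constructor
    · rintro ⟨z, hz, rfl⟩
      obtain ⟨y, hy, rfl⟩ := (ih z).1 hz
      exact ⟨y, hy, by rw [smul_smul, ← pow_succ']⟩
    · rintro ⟨y, hy, rfl⟩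
      refine ⟨(ϖ : F) ^ k • y, (ih _).2 ⟨y, hy, rfl⟩, ?_⟩
      rw [smul_smul, ← pow_succ']

variable [IsDiscreteValuationRing O]

lemma exists_pow_mul_coe (hϖ : Irreducible ϖ) (c : F) :
    ∃ (s : ℕ) (a : O), (ϖ : F) ^ s * c = (a : F) := by
  by_cases hc : c ∈ O
  · exact ⟨0, ⟨c, hc⟩, by simp⟩
  · have hcinv : c⁻¹ ∈ O := (O.mem_or_inv_mem c).resolve_left hc
    have hc0 : c ≠ 0 := fun h => hc (h ▸ O.zero_mem)
    have hb0 : (⟨c⁻¹, hcinv⟩ : O) ≠ 0 := by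
      simp [Subtype.ext_iff, inv_ne_zero hc0]
    obtain ⟨s, u, hu⟩ := IsDiscreteValuationRing.eq_unit_mul_pow_irreducible hb0 hϖ
    refine ⟨s, (u⁻¹ : Oˣ), ?_⟩
    have hco : c⁻¹ = ((u : O) : F) * (ϖ : F) ^ s := by
      have := congrArg (fun z : O => (z : F)) hu
      push_cast at this
      simpa using this
    have hu0 : ((u : O) : F) ≠ 0 := by
      intro h
      exact u.ne_zero (by exact_mod_cast h)
    have huinv : (((u⁻¹ : Oˣ) : O) : F) = ((u : O) : F)⁻¹ := by
      refine eq_inv_of_mul_eq_one_left ?_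
      rw [← Subring.coe_mul]
      norm_cast
      simp
    rw [huinv]
    have hϖ0 : (ϖ : F) ≠ 0 := coe_ne_zero hϖ
    have hc' : c = (((u : O) : F) * (ϖ : F) ^ s)⁻¹ := by rw [← hco, inv_inv]
    rw [hc']
    field_simp

lemma smul_mem_shift (hL : IsLatticeChain O ϖ L e) (hϖ : Irreducible ϖ) {i : ℤ} {v : V}
    (hv : v ∈ L i) {c : F} {s : ℕ} {a : O} (ha : (ϖ : F) ^ s * c = (a : F)) :
    c • v ∈ L (i - s * e) := by
  have hmem : (a : F) • v ∈ L ((i - s * e) + s * e) := by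
    rw [sub_add_cancel]
    have : (a : F) • v = a • v := rfl
    rw [this]
    exact (L i).smul_mem a hv
  obtain ⟨y, hy, hy'⟩ := (hL.mem_pow_iff _ s _).1 hmem
  have : (ϖ : F) ^ s • (c • v) = (ϖ : F) ^ s • y := by
    rw [smul_smul, ha, hy']
  have hcy : c • v = y := smul_right_injective V (pow_ne_zero s (coe_ne_zero hϖ)) this
  rw [hcy]
  exact hy

lemma exists_mem_s5 (hL : IsLatticeChain O ϖ L e) (hϖ : Irreducible ϖ) (v : V) :
    ∃ i, v ∈ L i := by
  have hv : v ∈ Submodule.span F ((L 0 : Set V)) := by rw [hL.spans 0]; trivial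
  induction hv using Submodule.span_induction with
  | mem x hx => exact ⟨0, hx⟩
  | zero => exact ⟨0, (L 0).zero_mem⟩
  | add x y _ _ hx hy =>
    obtain ⟨i, hi⟩ := hx
    obtain ⟨j, hj⟩ := hy
    exact ⟨min i j, (L _).add_mem (hL.antitone (min_le_left i j) hi)
      (hL.antitone (min_le_right i j) hj)⟩
  | smul c x _ hx =>
    obtain ⟨i, hi⟩ := hx
    obtain ⟨s, a, ha⟩ := exists_pow_mul_coe hϖ c
    exact ⟨i - s * e, hL.smul_mem_shift hϖ hi ha⟩

end IsLatticeChain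
end Aux2
section Aux3
variable {F : Type*} [Field F] {V : Type*} [AddCommGroup V] [Module F V]
variable {O : ValuationSubring F}

lemma exists_greatest_int {S : ℤ → Prop} (hdown : ∀ ⦃i j : ℤ⦄, i ≤ j → S j → S i)
    {i₁ i₀ : ℤ} (h1 : S i₁) (h0 : ¬ S i₀) : ∃ j, S j ∧ ¬ S (j + 1) := by
  classical
  have hex : ∃ k : ℕ, ¬ S (i₁ + k) := by
    refine ⟨(i₀ - i₁).toNat, fun hS => h0 (hdown ?_ hS)⟩
    omega
  let k := Nat.find hex
  have hk : ¬ S (i₁ + k) := Nat.find_spec hex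
  have hk0 : k ≠ 0 := by
    intro h
    rw [h] at hk
    exact hk (by simpa using h1)
  refine ⟨i₁ + k - 1, ?_, by simpa using hk⟩
  have hlt : k - 1 < k := Nat.sub_lt (Nat.pos_of_ne_zero hk0) one_pos
  have := Nat.find_min hex hlt
  push_neg at this
  have hcast : i₁ + ((k - 1 : ℕ) : ℤ) = i₁ + k - 1 := by omega
  rwa [hcast] at this

namespace IsLatticeChain

variable {ϖ : O} {L : ℤ → Submodule O V} {e : ℕ}
variable [IsDiscreteValuationRing O]

set_option synthInstance.maxHeartbeats 1000000 in
lemma exists_not_mem_s5 (hL : IsLatticeChain O ϖ L e) (hϖ : Irreducible ϖ) {m : V}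
    (hm : m ≠ 0) : ∃ j, m ∉ L j := by
  by_contra hall
  push_neg at hall
  have hmem : ∀ k : ℕ, m ∈ L (0 + k * e) := fun k => hall _
  choose y hy hy' using fun k => (hL.mem_pow_iff 0 k m).1 (hmem k)
  set Y : ℕ → ↥(L 0) := fun k => ⟨y k, hy k⟩ with hY
  have hstep : ∀ k : ℕ, ϖ • Y (k + 1) = Y k := by
    intro k
    have h1 : (ϖ : F) ^ k • y k = (ϖ : F) ^ k • ((ϖ : F) • y (k + 1)) := by
      rw [smul_smul, ← pow_succ]
      rw [← hy' k, ← hy' (k + 1)]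
    have h2 : y k = (ϖ : F) • y (k + 1) :=
      smul_right_injective V (pow_ne_zero k (coe_ne_zero hϖ)) h1
    ext
    exact h2.symm
  haveI : IsNoetherian O ↥(L 0) := isNoetherian_of_fg_of_noetherian (L 0) (hL.fg 0)
  set f : ℕ →o Submodule O ↥(L 0) :=
    ⟨fun k => Submodule.span O {Y k}, by
      apply monotone_nat_of_le_succ
      intro k
      rw [Submodule.span_le, Set.singleton_subset_iff]
      rw [← hstep k]
      exact Submodule.smul_mem _ _ (Submodule.mem_span_singleton_self _)⟩ with hf
  obtain ⟨n, hn⟩ := monotone_stabilizes_iff_noetherian.mpr inferInstance f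
  have hY1 : Y (n + 1) ∈ f n := by
    rw [hn (n + 1) (Nat.le_succ n)]
    exact Submodule.mem_span_singleton_self _
  obtain ⟨a, ha⟩ := Submodule.mem_span_singleton.1 hY1
  have h5 : y n = (ϖ : F) • y (n + 1) := by
    have := congrArg (fun z : ↥(L 0) => (z : V)) (hstep n)
    exact this.symm
  have h6 : y (n + 1) = (a : F) • y n := by
    have := congrArg (fun z : ↥(L 0) => (z : V)) ha
    exact this.symm
  have h7 : ((1 : F) - (a : F) * (ϖ : F)) • y (n + 1) = 0 := by
    rw [sub_smul, one_smul, mul_smul, ← h5, ← h6, sub_self]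
  have hne : (1 : F) - (a : F) * (ϖ : F) ≠ 0 := by
    intro h
    have h8 : a * ϖ = 1 := by
      have : ((a * ϖ : O) : F) = ((1 : O) : F) := by push_cast; linear_combination -h
      exact_mod_cast this
    exact hϖ.not_isUnit (IsUnit.of_mul_eq_one (a := ϖ) a (by rw [mul_comm]; exact h8))
  have hy0 : y (n + 1) = 0 := by
    rcases smul_eq_zero.1 h7 with h | h
    · exact absurd h hne
    · exact h
  apply hm
  rw [hy' (n + 1), hy0, smul_zero]

lemma exists_le (hL : IsLatticeChain O ϖ L e) (hϖ : Irreducible ϖ) {M : Submodule O V}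
    (hfg : M.FG) : ∃ I, M ≤ L I := by
  obtain ⟨T, hT⟩ := hfg
  classical
  have hCl : ∀ (T : Finset V), ∃ I, ∀ w ∈ T, w ∈ L I := by
    intro T
    induction T using Finset.induction_on with
    | empty => exact ⟨0, by simp⟩
    | @insert a T' hnm ih =>
      obtain ⟨I, hI⟩ := ih
      obtain ⟨i, hi⟩ := hL.exists_mem_s5 hϖ a
      refine ⟨min i I, ?_⟩
      intro w hw
      rcases Finset.mem_insert.1 hw with rfl | hw'
      · exact hL.antitone (min_le_left _ _) hi
      · exact hL.antitone (min_le_right _ _) (hI w hw')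
  obtain ⟨I, hI⟩ := hCl T
  exact ⟨I, hT ▸ Submodule.span_le.2 (fun w hw => hI w hw)⟩

end IsLatticeChain
end Aux3
section Aux4
variable {F : Type*} [Field F] {V : Type*} [AddCommGroup V] [Module F V]
variable {O : ValuationSubring F}

namespace IsLatticeChain

variable {ϖ : O} {L : ℤ → Submodule O V} {e : ℕ}
variable [IsDiscreteValuationRing O]

set_option synthInstance.maxHeartbeats 1000000 in
set_option maxHeartbeats 2000000 in
lemma exists_functional (hL : IsLatticeChain O ϖ L e) (hϖ : Irreducible ϖ) {j : ℤ} {x : V}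
    (hxj : x ∈ L j) (hx1 : x ∉ L (j + 1)) :
    ∃ f : V →ₗ[F] F, f x = 1 ∧ ∀ w ∈ L (j + 1), ∃ d : O, f w = (ϖ : F) * d := by
  classical
  haveI hfin : Module.Finite O ↥(L j) := Module.Finite.iff_fg.mpr (hL.fg j)
  haveI hnzd : NoZeroSMulDivisors O ↥(L j) := by
    refine ⟨fun {c z} h => ?_⟩
    have hcoe : (c : F) • (z : V) = 0 := congrArg (fun w : ↥(L j) => (w : V)) h
    rcases smul_eq_zero.1 hcoe with h' | h'
    · exact Or.inl (by exact_mod_cast h')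
    · exact Or.inr (by ext; exact h')
  obtain ⟨m, bM0⟩ := Module.basisOfFiniteTypeTorsionFree' (R := O) (M := ↥(L j))
  set N' : Submodule O ↥(L j) := (L (j + 1)).comap (L j).subtype with hN'
  obtain ⟨n, ⟨bM, bN, g, aa, hsnf⟩⟩ := N'.smithNormalForm bM0
  have memN' : ∀ z : ↥(L j), z ∈ N' ↔ (z : V) ∈ L (j + 1) := fun z => Iff.rfl
  -- repr of sums indexed along `g`
  have repr_sum : ∀ (c : Fin n → O) (s : Fin m),
      bM.repr (∑ u, c u • bM (g u)) s = ∑ u, c u * (if g u = s then 1 else 0) := by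
    intro c s
    rw [map_sum, Finsupp.finset_sum_apply]
    refine Finset.sum_congr rfl fun u _ => ?_
    rw [map_smul, Finsupp.smul_apply, bM.repr_self, Finsupp.single_apply, smul_eq_mul]
  have sum_single : ∀ (q : Fin n → O) (t : Fin n),
      (∑ u, q u * (if g u = g t then 1 else 0)) = q t := by
    intro q t
    rw [Finset.sum_eq_single t]
    · simp
    · intro u _ hut
      rw [if_neg (fun h => hut (g.injective h)), mul_zero]
    · intro ht
      exact absurd (Finset.mem_univ t) ht
  -- expansion of elements of N'
  have expand : ∀ z : ↥(L j), (hz : z ∈ N') → ∃ c : Fin n → O,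
      z = ∑ u, (c u * aa u) • bM (g u) := by
    intro z hz
    refine ⟨fun u => bN.repr ⟨z, hz⟩ u, ?_⟩
    have h1 := bN.sum_repr ⟨z, hz⟩
    have h2 := congrArg (fun w : ↥N' => (w : ↥(L j))) h1
    simp only [AddSubmonoidClass.coe_finset_sum, SetLike.val_smul] at h2
    refine h2.symm.trans (Finset.sum_congr rfl fun u _ => ?_)
    rw [hsnf u, smul_smul]
  have hϖmem : ∀ s : Fin m, (ϖ • bM s : ↥(L j)) ∈ N' := by
    intro s
    rw [memN']
    have : ((ϖ • bM s : ↥(L j)) : V) = (ϖ : F) • ((bM s : ↥(L j)) : V) := rfl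
    rw [this]
    exact hL.smul_mem_succ j (SetLike.coe_mem _)
  have hϖ0 : ϖ ≠ 0 := hϖ.ne_zero
  -- g is surjective
  have surj : ∀ s : Fin m, ∃ t, g t = s := by
    intro s
    by_contra hng
    push_neg at hng
    obtain ⟨c, hc⟩ := expand _ (hϖmem s)
    have h1 := congrArg (fun z => bM.repr z s) hc
    simp only [map_smul, Finsupp.smul_apply, Module.Basis.repr_self, Finsupp.single_eq_same,
      smul_eq_mul, mul_one] at h1
    rw [repr_sum] at h1
    rw [Finset.sum_eq_zero (fun u _ => by rw [if_neg (hng u), mul_zero])] at h1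
    exact hϖ0 h1
  -- each aa t divides ϖ
  have dvd1 : ∀ t : Fin n, aa t ∣ ϖ := by
    intro t
    obtain ⟨c, hc⟩ := expand _ (hϖmem (g t))
    have h1 := congrArg (fun z => bM.repr z (g t)) hc
    simp only [map_smul, Finsupp.smul_apply, Module.Basis.repr_self, Finsupp.single_eq_same,
      smul_eq_mul, mul_one] at h1
    rw [repr_sum, sum_single (fun u => c u * aa u) t] at h1
    exact ⟨c t, by rw [h1, mul_comm]⟩
  set σ : Fin n ≃ Fin m := Equiv.ofBijective g ⟨g.injective, surj⟩ with hσ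
  set cx : Fin m → O := fun s => bM.repr ⟨x, hxj⟩ s with hcx
  have hxnotN : (⟨x, hxj⟩ : ↥(L j)) ∉ N' := fun h => hx1 ((memN' _).1 h)
  have exists_t : ∃ t, ¬ aa t ∣ cx (g t) := by
    by_contra h
    push_neg at h
    choose d hd using h
    apply hxnotN
    have heq : (⟨x, hxj⟩ : ↥(L j)) = ∑ u, (d u * aa u) • bM (g u) := by
      have h1 : (⟨x, hxj⟩ : ↥(L j)) = ∑ s, cx s • bM s := (bM.sum_repr _).symm
      have h2 : (∑ s, cx s • bM s) = ∑ u, cx (g u) • bM (g u) :=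
        (Equiv.sum_comp σ (fun s => cx s • bM s)).symm
      rw [h1, h2]
      refine Finset.sum_congr rfl fun u _ => ?_
      rw [hd u, mul_comm]
    rw [heq]
    refine Submodule.sum_mem _ fun u _ => ?_
    rw [mul_smul, ← hsnf u]
    exact Submodule.smul_mem _ _ (SetLike.coe_mem (bN u))
  obtain ⟨t, ht⟩ := exists_t
  have hnu : ¬ IsUnit (aa t) := fun h => ht h.dvd
  obtain ⟨b, hb⟩ := dvd1 t
  have hbu : IsUnit b := (hϖ.isUnit_or_isUnit hb).resolve_left hnu
  have hϖdvd_c : ¬ ϖ ∣ cx (g t) := by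
    rintro ⟨q, hq⟩
    exact ht ⟨b * q, by rw [hq, hb]; ring⟩
  have hcu : IsUnit (cx (g t)) := by
    by_contra hcu
    have hmm : cx (g t) ∈ IsLocalRing.maximalIdeal O := (IsLocalRing.mem_maximalIdeal _).mpr hcu
    rw [hϖ.maximalIdeal_eq] at hmm
    exact hϖdvd_c (Ideal.mem_span_singleton.1 hmm)
  -- the F-basis of V coming from bM
  set v : Fin m → V := fun s => ((bM s : ↥(L j)) : V) with hv
  have li_O : LinearIndependent O v := by
    have h2 := bM.linearIndependent.map' (L j).subtype (Submodule.ker_subtype _)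
    exact h2
  have li_F : LinearIndependent F v := by
    rw [← LinearIndependent.iff_fractionRing (R := O) (K := F)]
    exact li_O
  -- coercion of expansions
  have coe_exp : ∀ z : ↥(L j), (z : V) = ∑ s, ((bM.repr z s : O) : F) • v s := by
    intro z
    have h1 : z = ∑ s, bM.repr z s • bM s := (bM.sum_repr _).symm
    have h2 := congrArg (fun w : ↥(L j) => (w : V)) h1
    simp only [AddSubmonoidClass.coe_finset_sum, SetLike.val_smul] at h2
    exact h2
  have hspan : ⊤ ≤ Submodule.span F (Set.range v) := by
    rw [← hL.spans j]
    refine Submodule.span_le.2 ?_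
    intro w hw
    have h3 : (∑ s, ((bM.repr ⟨w, hw⟩ s : O) : F) • v s) ∈ Submodule.span F (Set.range v) :=
      Submodule.sum_mem _ fun s _ =>
        Submodule.smul_mem _ _ (Submodule.subset_span (Set.mem_range_self s))
    rw [← coe_exp ⟨w, hw⟩] at h3
    exact h3
  set bV : Module.Basis (Fin m) F V := Module.Basis.mk li_F hspan with hbV
  have reprV : ∀ (z : ↥(L j)) (s : Fin m), bV.repr (z : V) s = ((bM.repr z s : O) : F) := by
    intro z s
    rw [coe_exp z, map_sum, Finsupp.finset_sum_apply]
    have hterm : ∀ s' : Fin m,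
        (bV.repr (((bM.repr z s' : O) : F) • v s')) s
          = ((bM.repr z s' : O) : F) * (if s' = s then 1 else 0) := by
      intro s'
      rw [map_smul, Finsupp.smul_apply]
      rw [show v s' = bV s' from (Module.Basis.mk_apply li_F hspan s').symm]
      rw [bV.repr_self, Finsupp.single_apply, smul_eq_mul]
    rw [Finset.sum_congr rfl fun s' _ => hterm s']
    rw [Finset.sum_eq_single s]
    · simp
    · intro s' _ hs'
      rw [if_neg hs', mul_zero]
    · intro hs
      exact absurd (Finset.mem_univ s) hs
  set uc : Oˣ := hcu.unit with huc
  refine ⟨(((uc⁻¹ : Oˣ) : O) : F) • bV.coord (g t), ?_, ?_⟩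
  · -- f x = 1
    rw [LinearMap.smul_apply, Module.Basis.coord_apply, smul_eq_mul]
    rw [show x = ((⟨x, hxj⟩ : ↥(L j)) : V) from rfl, reprV ⟨x, hxj⟩ (g t)]
    rw [← Subring.coe_mul]
    have : ((uc⁻¹ : Oˣ) : O) * cx (g t) = 1 := by
      rw [show cx (g t) = (uc : O) from hcu.unit_spec.symm]
      exact_mod_cast uc.inv_mul
    rw [this, OneMemClass.coe_one]
  · -- values on L (j+1)
    intro w hw
    have hwj : w ∈ L j := hL.antitone (by omega : j ≤ j + 1) hw
    have hN : (⟨w, hwj⟩ : ↥(L j)) ∈ N' := hw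
    obtain ⟨c, hc⟩ := expand _ hN
    have hrw : bM.repr ⟨w, hwj⟩ (g t) = c t * aa t := by
      rw [hc, repr_sum, sum_single (fun u => c u * aa u) t]
    obtain ⟨u2, hu2⟩ := hbu
    have huu : (u2 : O) * ((u2⁻¹ : Oˣ) : O) = 1 := by exact_mod_cast u2.mul_inv
    have haat : aa t = ϖ * ((u2⁻¹ : Oˣ) : O) := by
      calc aa t = aa t * ((u2 : O) * ((u2⁻¹ : Oˣ) : O)) := by rw [huu, mul_one]
        _ = (aa t * b) * ((u2⁻¹ : Oˣ) : O) := by rw [hu2]; ring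
        _ = ϖ * ((u2⁻¹ : Oˣ) : O) := by rw [← hb]
    refine ⟨((uc⁻¹ : Oˣ) : O) * c t * ((u2⁻¹ : Oˣ) : O), ?_⟩
    rw [LinearMap.smul_apply, Module.Basis.coord_apply, smul_eq_mul]
    rw [show w = ((⟨w, hwj⟩ : ↥(L j)) : V) from rfl, reprV ⟨w, hwj⟩ (g t)]
    rw [hrw, haat]
    push_cast
    ring

end IsLatticeChain
end Aux4
section Aux5
variable {F : Type*} [Field F] {V : Type*} [AddCommGroup V] [Module F V]
variable {O : ValuationSubring F}

namespace IsLatticeChain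

variable {ϖ : O} {L : ℤ → Submodule O V} {e : ℕ}

lemma stable_shift (hL : IsLatticeChain O ϖ L e) (hϖ : Irreducible ϖ) (a : V →ₗ[F] V)
    (i : ℤ) : (∀ w ∈ L i, a w ∈ L i) ↔ (∀ w ∈ L (i + e), a w ∈ L (i + e)) := by
  constructor
  · intro h w hw
    obtain ⟨z, hz, rfl⟩ := (hL.smul_eq i w).1 hw
    rw [map_smul]
    exact hL.smul_mem_of_mem (h z hz)
  · intro h w hw
    have h1 : (ϖ : F) • w ∈ L (i + e) := hL.smul_mem_of_mem hw
    have h2 := h _ h1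
    rw [map_smul] at h2
    obtain ⟨z, hz, hz'⟩ := (hL.smul_eq i _).1 h2
    rw [smul_right_injective V (coe_ne_zero hϖ) hz']
    exact hz

lemma stable_iff_of_shift (hL : IsLatticeChain O ϖ L e) (hϖ : Irreducible ϖ)
    (a : V →ₗ[F] V) : ∀ (k : ℤ) (i : ℤ),
    ((∀ w ∈ L (i + k * e), a w ∈ L (i + k * e)) ↔ (∀ w ∈ L i, a w ∈ L i)) := by
  intro k
  induction k using Int.induction_on with
  | zero => intro i; norm_num
  | succ k ih =>
    intro i
    have h1 : i + ((k : ℤ) + 1) * e = (i + k * e) + e := by push_cast; ring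
    rw [h1, ← stable_shift hL hϖ a (i + k * e)]
    exact ih i
  | pred k ih =>
    intro i
    have h1 : i + (-(k : ℤ) - 1) * e = i - ((k : ℤ) + 1) * e := by push_cast; ring
    rw [h1, stable_shift hL hϖ a (i - ((k : ℤ) + 1) * e)]
    have h2 : i - ((k : ℤ) + 1) * e + e = i + (-(k : ℤ)) * e := by ring
    rw [h2]
    exact ih i

variable [IsDiscreteValuationRing O]

lemma exists_stab (hL : IsLatticeChain O ϖ L e) (hϖ : Irreducible ϖ) {j : ℤ} {x y : V}
    (hxj : x ∈ L j) (hx1 : x ∉ L (j + 1)) (hy : y ∈ L j) :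
    ∃ a : Module.End F V, a ∈ hereditaryOrder O L ∧ a x = y := by
  obtain ⟨f, hfx, hf1⟩ := hL.exists_functional hϖ hxj hx1
  refine ⟨f.smulRight y, ?_, by simp [LinearMap.smulRight_apply, hfx]⟩
  have base : ∀ i : ℤ, j + 1 ≤ i → i ≤ j + e →
      ∀ w ∈ L i, (f.smulRight y) w ∈ L i := by
    intro i hi1 hi2 w hw
    have hw1 : w ∈ L (j + 1) := hL.antitone hi1 hw
    obtain ⟨d, hd⟩ := hf1 w hw1
    rw [LinearMap.smulRight_apply, hd, mul_smul]
    have hdy : (d : F) • y ∈ L j := (L j).smul_mem d hy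
    exact hL.antitone hi2 (hL.smul_mem_of_mem hdy)
  intro i w hw
  have he : (0 : ℤ) < e := by exact_mod_cast hL.period_pos
  have hqe : (e : ℤ) * ((j - i) / e) + (j - i) % e = j - i := Int.mul_ediv_add_emod _ _
  have hr0 : 0 ≤ (j - i) % e := Int.emod_nonneg _ (ne_of_gt he)
  have hrlt : (j - i) % e < e := Int.emod_lt_of_pos _ he
  have hexp : i + ((j - i) / e + 1) * e = j - (j - i) % e + e := by linear_combination hqe
  have hbase : ∀ w ∈ L (i + ((j - i) / e + 1) * e),
      (f.smulRight y) w ∈ L (i + ((j - i) / e + 1) * e) := by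
    rw [hexp]
    exact base _ (by omega) (by omega)
  exact (hL.stable_iff_of_shift hϖ (f.smulRight y) ((j - i) / e + 1) i).1 hbase w hw

lemma eq_of_stable_s5 [Nontrivial V] (hL : IsLatticeChain O ϖ L e) (hϖ : Irreducible ϖ)
    {M : Submodule O V} (hfg : M.FG) (hspan : Submodule.span F ((M : Set V)) = ⊤)
    (hstab : ∀ a ∈ hereditaryOrder O L, ∀ w ∈ M, a w ∈ M) : ∃ j, M = L j := by
  have hMne : M ≠ ⊥ := by
    intro h
    rw [h] at hspan
    simp only [Submodule.bot_coe, Submodule.span_zero_singleton] at hspan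
    exact bot_ne_top hspan
  obtain ⟨mv, hmv, hmv0⟩ := Submodule.exists_mem_ne_zero_of_ne_bot hMne
  obtain ⟨i₁, hi₁⟩ := hL.exists_le hϖ hfg
  obtain ⟨i₀, hi₀⟩ := hL.exists_not_mem_s5 hϖ hmv0
  have h0 : ¬ M ≤ L i₀ := fun h => hi₀ (h hmv)
  obtain ⟨j, hj, hj1⟩ := exists_greatest_int (S := fun i => M ≤ L i)
      (fun i j hij h => h.trans (hL.antitone hij)) hi₁ h0
  have hex : ∃ x ∈ M, x ∉ L (j + 1) := by
    by_contra h
    push_neg at h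
    exact hj1 h
  obtain ⟨x, hxM, hx1⟩ := hex
  have hxj : x ∈ L j := hj hxM
  refine ⟨j, le_antisymm hj ?_⟩
  intro y hy
  obtain ⟨a, haH, hax⟩ := hL.exists_stab hϖ hxj hx1 hy
  rw [← hax]
  exact hstab a haH x hxM

end IsLatticeChain
end Aux5
variable [FiniteDimensional F V] [Nontrivial V]
variable (OF : ValuationSubring F) [IsDiscreteValuationRing OF]
  [Finite (IsLocalRing.ResidueField OF)] (ϖF : OF)

/-- `𝔄(L) ⊆ 𝔄(L')` iff every lattice occurring in the chain `L'`
occurs in the chain `L`; and in that case `𝔓(L') ⊆ 𝔓(L)`. -/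
theorem hereditaryOrder_le_iff_subchain
    (hϖF : Irreducible ϖF)
    (L L' : ℤ → Submodule OF V) (e e' : ℕ)
    (hL : IsLatticeChain OF ϖF L e) (hL' : IsLatticeChain OF ϖF L' e') :
    (hereditaryOrder OF L ≤ hereditaryOrder OF L' ↔ ∀ i : ℤ, ∃ j : ℤ, L' i = L j) ∧
    (hereditaryOrder OF L ≤ hereditaryOrder OF L' →
      radicalSet OF L' ⊆ radicalSet OF L) := by
  have htoSub : hereditaryOrder OF L ≤ hereditaryOrder OF L' →
      ∀ i : ℤ, ∃ j : ℤ, L' i = L j := by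
    intro h i
    exact hL.eq_of_stable_s5 hϖF (hL'.fg i) (hL'.spans i) (fun a ha w hw => (h ha) i w hw)
  constructor
  · constructor
    · exact htoSub
    · intro hsub a ha
      rw [mem_hereditaryOrder] at ha ⊢
      intro i w hw
      obtain ⟨j, hj⟩ := hsub i
      rw [hj] at hw ⊢
      exact ha j w hw
  · intro h
    have hsub := htoSub h
    choose σ hσ using hsub
    have hmono : StrictMono σ := by
      apply strictMono_int_of_lt_succ
      intro i
      have h1 : L (σ (i + 1)) < L (σ i) := by
        rw [← hσ, ← hσ]
        exact hL'.strict i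
      exact hL.lt_of_lt h1
    have hshift : ∀ i : ℤ, σ (i + e') = σ i + e := by
      intro i
      have h1 : L (σ (i + e')) = L (σ i + e) := by
        rw [← hσ]
        ext z
        rw [hL'.smul_eq i z, hL.smul_eq (σ i) z, hσ i]
      exact hL.injective h1
    have hshiftk : ∀ (k : ℤ) (i : ℤ), σ (i + k * e') = σ i + k * e := by
      intro k
      induction k using Int.induction_on with
      | zero => intro i; simp
      | succ k ih =>
        intro i
        have h2 : i + ((k : ℤ) + 1) * e' = (i + k * e') + e' := by push_cast; ring
        rw [h2, hshift, ih]
        ring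
      | pred k ih =>
        intro i
        have h2 : i + (-(k : ℤ) - 1) * e' + e' = i + (-(k : ℤ)) * e' := by ring
        have h3 := hshift (i + (-(k : ℤ) - 1) * e')
        rw [h2, ih] at h3
        linear_combination -h3
    have he : (0 : ℤ) < e := by exact_mod_cast hL.period_pos
    intro a ha
    simp only [radicalSet, Set.mem_setOf_eq] at ha ⊢
    intro jdx w hw
    have hlow : σ (0 + (-(max 0 (σ 0 - jdx))) * e') ≤ jdx := by
      rw [hshiftk]
      have h4 : σ 0 - jdx ≤ max 0 (σ 0 - jdx) := le_max_right _ _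
      have h5 : max 0 (σ 0 - jdx) ≤ max 0 (σ 0 - jdx) * e :=
        le_mul_of_one_le_right (le_max_left _ _) he
      linarith
    have hhigh : ¬ (σ (0 + (max 0 (jdx + 1 - σ 0)) * e') ≤ jdx) := by
      rw [hshiftk]
      have h4 : jdx + 1 - σ 0 ≤ max 0 (jdx + 1 - σ 0) := le_max_right _ _
      have h5 : max 0 (jdx + 1 - σ 0) ≤ max 0 (jdx + 1 - σ 0) * e :=
        le_mul_of_one_le_right (le_max_left _ _) he
      intro hc
      linarith
    obtain ⟨i, hi, hi1⟩ := exists_greatest_int (S := fun i => σ i ≤ jdx)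
      (fun i j hij hj => le_trans (hmono.monotone hij) hj) hlow hhigh
    have hj1 : jdx + 1 ≤ σ (i + 1) := by omega
    have hw' : w ∈ L' i := by
      rw [hσ i]
      exact hL.antitone hi hw
    have h6 := ha i w hw'
    rw [hσ (i + 1)] at h6
    exact hL.antitone hj1 h6

end
end

section
/- Let M and M′ be 𝒪_E-lattice chains in V, viewed by restriction of scalars also as 𝒪_F-lattice chains, with attached 𝒪_F-hereditary orders 𝔄(M), 𝔄(M′) and 𝒪_E-hereditary orders 𝔅(M), 𝔅(M′). If 𝔄(M) = 𝔄(M′) then 𝔅(M) = 𝔅(M′); that is, the map 𝔅 ↦ 𝔄(𝔅) from 𝒪_E-hereditary orders in B to 𝒪_F-hereditary orders in A is injective. Moreover this map is G_E-equivariant: for all h ∈ G_E, 𝔄(h·M) = h·𝔄(M)·h⁻¹, where (h·M)(i) = h(M(i)). -/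
/-!
Context: `F` is a nonarchimedean local field, modelled as a field together with a
valuation subring `OF` which is a discrete valuation ring with finite residue field,
with a fixed uniformizer `ϖF` (an irreducible element of `OF`).  `V` is a nonzero
finite-dimensional `F`-vector space, `A = End_F V` and `G = GL_F(V) = (End_F V)ˣ`.
-/

noncomputable section

variable {F : Type*} [Field F] {V : Type*} [AddCommGroup V] [Module F V]

variable {E : Type*} [Field E] [Algebra F E]

/-- Restriction of scalars of a submodule, along compatible valuation subrings
`𝒪_F ⊆ F` and `𝒪_E ⊆ E` of a field extension `E/F`. -/
def Submodule.restrictVS {W : Type*} [AddCommGroup W] [Module F W] [Module E W]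
    [IsScalarTower F E W] {OF : ValuationSubring F} {OE : ValuationSubring E}
    (hcomp : ∀ x : F, x ∈ OF → algebraMap F E x ∈ OE)
    (N : Submodule OE W) : Submodule OF W where
  carrier := N
  add_mem' := fun ha hb => N.add_mem ha hb
  zero_mem' := N.zero_mem
  smul_mem' := fun c x hx => by
    show (c : F) • x ∈ N
    rw [← algebraMap_smul E (c : F) x]
    exact N.smul_mem (⟨algebraMap F E (c : F), hcomp c c.2⟩ : OE) hx

/-- Restriction of scalars `B = End_E(V) → A = End_F(V)`, as a ring homomorphism;
its range is the centralizer `B ⊆ A`. -/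
def endRestrict (F : Type*) {E V : Type*} [Field F] [Field E] [Algebra F E]
    [AddCommGroup V] [Module F V] [Module E V] [IsScalarTower F E V] :
    Module.End E V →+* Module.End F V where
  toFun f := LinearMap.restrictScalars F f
  map_one' := rfl
  map_mul' := fun _ _ => rfl
  map_zero' := rfl
  map_add' := fun _ _ => rfl

/-- Restriction of scalars on general linear groups, `G_E = GL_E(V) → G = GL_F(V)`;
its range is the subgroup `G_E ⊆ G`. -/
def unitRestrict (F : Type*) {E V : Type*} [Field F] [Field E] [Algebra F E]
    [AddCommGroup V] [Module F V] [Module E V] [IsScalarTower F E V] :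
    (Module.End E V)ˣ →* (Module.End F V)ˣ :=
  Units.map (endRestrict F (E := E) (V := V)).toMonoidHom

/-- The image `h (N)` of an `𝒪_E`-submodule of `V` under an `E`-linear endomorphism. -/
def mapChain [Module E V] {OE : ValuationSubring E}
    (h : Module.End E V) (N : Submodule OE V) : Submodule OE V where
  carrier := h '' N
  add_mem' := fun {x y} hx hy => by
    obtain ⟨a, ha, rfl⟩ := hx
    obtain ⟨b, hb, rfl⟩ := hy
    exact ⟨a + b, N.add_mem ha hb, map_add h a b⟩
  zero_mem' := ⟨0, N.zero_mem, map_zero h⟩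
  smul_mem' := fun c x hx => by
    obtain ⟨a, ha, rfl⟩ := hx
    refine ⟨c • a, N.smul_mem c ha, ?_⟩
    show h ((c : E) • a) = (c : E) • h a
    exact map_smul h (c : E) a

variable [FiniteDimensional F V] [Nontrivial V]
variable (OF : ValuationSubring F) [IsDiscreteValuationRing OF]
  [Finite (IsLocalRing.ResidueField OF)] (ϖF : OF)

variable [FiniteDimensional F E] [Module E V] [IsScalarTower F E V]
variable (OE : ValuationSubring E) [IsDiscreteValuationRing OE] (ϖE : OE)

/-- The map `𝔅 ↦ 𝔄(𝔅)` from `𝒪_E`-hereditary orders to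
`𝒪_F`-hereditary orders is injective (`𝔄(M) = 𝔄(M') → 𝔅(M) = 𝔅(M')`) and
`G_E`-equivariant: `𝔄(h · M) = h · 𝔄(M) · h⁻¹` for every `h ∈ G_E`. -/
theorem hereditaryOrder_restriction_injective_equivariant
    (hϖF : Irreducible ϖF) (hϖE : Irreducible ϖE)
    (hcomp : ∀ x : F, x ∈ OF → algebraMap F E x ∈ OE)
    (M M' : ℤ → Submodule OE V) (e₁ e₂ : ℕ)
    (hM : IsLatticeChain OE ϖE M e₁) (hM' : IsLatticeChain OE ϖE M' e₂) :
    (hereditaryOrder OF (fun i => Submodule.restrictVS hcomp (M i))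
        = hereditaryOrder OF (fun i => Submodule.restrictVS hcomp (M' i))
      → hereditaryOrder OE M = hereditaryOrder OE M') ∧
    (∀ h : (Module.End E V)ˣ,
      (hereditaryOrder OF
          (fun i => Submodule.restrictVS hcomp (mapChain (h : Module.End E V) (M i))) :
        Set (Module.End F V))
        = conjIm (unitRestrict F h)
            (hereditaryOrder OF (fun i => Submodule.restrictVS hcomp (M i)) :
              Set (Module.End F V))) := by
  constructor
  · intro hAA
    ext b
    constructor <;> intro hb
    · have h1 : endRestrict F b ∈
          hereditaryOrder OF (fun i => Submodule.restrictVS hcomp (M i)) :=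
        fun i x hx => hb i x hx
      rw [hAA] at h1
      exact fun i x hx => h1 i x hx
    · have h1 : endRestrict F b ∈
          hereditaryOrder OF (fun i => Submodule.restrictVS hcomp (M' i)) :=
        fun i x hx => hb i x hx
      rw [← hAA] at h1
      exact fun i x hx => h1 i x hx
  · intro h
    set g : (Module.End F V)ˣ := unitRestrict F h with hg
    ext a
    simp only [SetLike.mem_coe, conjIm, Set.mem_image]
    constructor
    · intro ha
      refine ⟨(↑g⁻¹ : Module.End F V) * a * (↑g : Module.End F V), ?_, ?_⟩
      · intro i x hx
        have hx' : (h : Module.End E V) x ∈ mapChain (h : Module.End E V) (M i) :=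
          ⟨x, hx, rfl⟩
        have h2 : a ((h : Module.End E V) x) ∈
            ((h : Module.End E V) '' (M i : Set V)) := ha i _ hx'
        obtain ⟨y, hy, hxy⟩ := h2
        have e1 : ((↑g⁻¹ : Module.End F V) * a * (↑g : Module.End F V)) x = y := by
          show (↑(h⁻¹) : Module.End E V) (a ((h : Module.End E V) x)) = y
          rw [← hxy]
          show ((↑h⁻¹ * ↑h : Module.End E V)) y = y
          rw [h.inv_mul]; rfl
        show ((↑g⁻¹ : Module.End F V) * a * (↑g : Module.End F V)) x ∈ M i
        rw [e1]; exact hy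
      · simp [mul_assoc, Units.mul_inv, Units.mul_inv_cancel_left]
    · rintro ⟨s, hs, rfl⟩
      intro i x hx
      obtain ⟨z, hz, rfl⟩ : ∃ z ∈ (M i : Set V), (h : Module.End E V) z = x := hx
      have hsz : s z ∈ M i := hs i z hz
      refine ⟨s z, hsz, ?_⟩
      show (h : Module.End E V) (s z) =
        ((↑g : Module.End F V) * s * (↑g⁻¹ : Module.End F V)) ((h : Module.End E V) z)
      have e2 : ((↑g⁻¹ : Module.End F V)) ((h : Module.End E V) z) = z := by
        show ((↑h⁻¹ * ↑h : Module.End E V)) z = z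
        rw [h.inv_mul]; rfl
      show (h : Module.End E V) (s z) =
        ((↑g : Module.End F V)) (s (((↑g⁻¹ : Module.End F V)) ((h : Module.End E V) z)))
      rw [e2]
      rfl

end
end
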